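/- Let (Λ, φ) be a topological flow on a compact metric space, let γ ⊂ Λ be a closed orbit of φ with minimal period T₀ > 0, and let d₀ > 0. Then there exists d₁ > 0 such that: if ξ₁, ξ₂ are d₁-pseudotrajectories of φ and t₁, t₂ ∈ ℝ satisfy t₂ − t₁ ≥ T₀/d₁, dist(ξ₁(t₁), γ) < d₁ and dist(ξ₂(t₂), γ) < d₁, then there exists a d₀-pseudotrajectory ξ of φ with ξ(t) = ξ₁(t) for all t ≤ t₁, ξ(t) = ξ₂(t) for all t ≥ t₂, and ξ(t) ∈ γ for all t ∈ (t₁, t₂). -/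

import Mathlib

open Metric Set

/-- A topological flow: a continuous map `φ : ℝ × Λ → Λ` with `φ 0 x = x` and
`φ (s+t) x = φ s (φ t x)`. -/
def IsFlow {Λ : Type*} [TopologicalSpace Λ] (φ : ℝ → Λ → Λ) : Prop :=
  Continuous (fun q : ℝ × Λ => φ q.1 q.2) ∧ (∀ x, φ 0 x = x) ∧
    ∀ s t x, φ (s + t) x = φ s (φ t x)

/-- `ξ : ℝ → Λ` is a `d`-pseudotrajectory of the flow `φ`. -/
def IsPseudo {Λ : Type*} [MetricSpace Λ] (φ : ℝ → Λ → Λ) (d : ℝ) (ξ : ℝ → Λ) : Prop :=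
  ∀ t : ℝ, ∀ s ∈ Set.Icc (0 : ℝ) 1, dist (ξ (t + s)) (φ s (ξ t)) < d

/-- An orientation-preserving homeomorphism of `ℝ`. -/
def IsRep (f : ℝ → ℝ) : Prop :=
  Continuous f ∧ StrictMono f ∧ Function.Surjective f

/-- Membership in `Rep(ε)`. -/
def IsRepIn (ε : ℝ) (f : ℝ → ℝ) : Prop :=
  IsRep f ∧ ∀ a b : ℝ, b < a → |(f a - f b) / (a - b) - 1| < ε

/-- The standard shadowing property (on the whole space). -/
def StdShadowing {Λ : Type*} [MetricSpace Λ] (φ : ℝ → Λ → Λ) : Prop :=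
  ∀ ε > 0, ∃ d > 0, ∀ ξ : ℝ → Λ, IsPseudo φ d ξ →
    ∃ (x : Λ) (h : ℝ → ℝ), IsRepIn ε h ∧ ∀ t : ℝ, dist (ξ t) (φ (h t) x) < ε

/-- The chain recurrent set of a flow. -/
def CR {Λ : Type*} [MetricSpace Λ] (φ : ℝ → Λ → Λ) : Set Λ :=
  {x | ∀ d > 0, ∀ T > 0, ∃ ξ : ℝ → Λ, IsPseudo φ d ξ ∧ ξ 0 = x ∧ ∃ t ≥ T, ξ t = x}

set_option maxHeartbeats 1600000 in
/-- Lemma 5.1: pseudotrajectories passing near a closed orbit `γ` and separated in time by at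
least `T₀/d₁` can be connected through `γ`, yielding a `d₀`-pseudotrajectory. -/
theorem connect_pseudotrajectories_through_closed_orbit
    {Λ : Type*} [MetricSpace Λ] [CompactSpace Λ]
    (φ : ℝ → Λ → Λ) (hφ : IsFlow φ)
    (p : Λ) (T₀ : ℝ) (hT₀ : 0 < T₀) (hper : φ T₀ p = p)
    (hmin : ∀ t ∈ Set.Ioo 0 T₀, φ t p ≠ p)
    (γ : Set Λ) (hγ : γ = Set.range fun t : ℝ => φ t p)
    (d₀ : ℝ) (hd₀ : 0 < d₀) :
    ∃ d₁ > 0, ∀ ξ₁ ξ₂ : ℝ → Λ, IsPseudo φ d₁ ξ₁ → IsPseudo φ d₁ ξ₂ →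
      ∀ t₁ t₂ : ℝ, T₀ / d₁ ≤ t₂ - t₁ →
        Metric.infDist (ξ₁ t₁) γ < d₁ → Metric.infDist (ξ₂ t₂) γ < d₁ →
        ∃ ξ : ℝ → Λ, IsPseudo φ d₀ ξ ∧ (∀ t ≤ t₁, ξ t = ξ₁ t) ∧
          (∀ t, t₂ ≤ t → ξ t = ξ₂ t) ∧ ∀ t ∈ Set.Ioo t₁ t₂, ξ t ∈ γ := by
  obtain ⟨hcont, hzero, hadd⟩ := hφ
  -- integer periodicity
  have hneg : φ (-T₀) p = p := by
    have h := hadd (-T₀) T₀ p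
    rw [hper] at h
    simpa [hzero] using h.symm
  have hperZ : ∀ k : ℤ, φ ((k : ℝ) * T₀) p = p := by
    intro k
    induction k using Int.induction_on with
    | zero => simpa using hzero p
    | succ n ih =>
        have h : ((n : ℝ) + 1) * T₀ = T₀ + (n : ℝ) * T₀ := by ring
        push_cast
        rw [h, hadd]
        push_cast at ih
        rw [ih, hper]
    | pred n ih =>
        have h : (-(n : ℝ) - 1) * T₀ = -T₀ + (-(n : ℝ)) * T₀ := by ring
        push_cast
        rw [h, hadd]
        push_cast at ih
        rw [ih, hneg]
  -- uniform continuity on [-2,2] × Λ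
  have UC : ∀ ε > (0:ℝ), ∃ η > (0:ℝ), ∀ s ∈ Icc (-2:ℝ) 2, ∀ s' ∈ Icc (-2:ℝ) 2,
      ∀ x y : Λ, |s - s'| < η → dist x y < η → dist (φ s x) (φ s' y) < ε := by
    intro ε hε
    have hK : IsCompact ((Icc (-2:ℝ) 2) ×ˢ (univ : Set Λ)) :=
      isCompact_Icc.prod isCompact_univ
    have huc : UniformContinuousOn (fun q : ℝ × Λ => φ q.1 q.2)
        ((Icc (-2:ℝ) 2) ×ˢ (univ : Set Λ)) :=
      hK.uniformContinuousOn_of_continuous hcont.continuousOn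
    rw [Metric.uniformContinuousOn_iff] at huc
    obtain ⟨ηu, hηu, H⟩ := huc ε hε
    refine ⟨ηu, hηu, fun s hsm s' hs'm x y h1 h2 => ?_⟩
    have := H (s, x) ⟨hsm, mem_univ _⟩ (s', y) ⟨hs'm, mem_univ _⟩ ?_
    · exact this
    · rw [Prod.dist_eq]
      exact max_lt (by simpa [Real.dist_eq] using h1) h2
  obtain ⟨η, hη0, hη⟩ := UC (d₀ / 2) (by linarith)
  set η' : ℝ := min η (min 1 (d₀ / 2)) with hη'def
  clear_value η'
  have hη'0 : 0 < η' := hη'def ▸ lt_min hη0 (lt_min one_pos (by linarith))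
  have hη'η : η' ≤ η := hη'def ▸ min_le_left _ _
  have hη'1 : η' ≤ 1 := hη'def ▸ (min_le_right _ _).trans (min_le_left _ _)
  have hη'd : η' ≤ d₀ / 2 := hη'def ▸ (min_le_right _ _).trans (min_le_right _ _)
  obtain ⟨η₂, hη₂0, hη₂⟩ := UC (η' / 2) (by linarith)
  set η₂' : ℝ := min η₂ η' with hη₂'def
  clear_value η₂'
  have hη₂'0 : 0 < η₂' := hη₂'def ▸ lt_min hη₂0 hη'0
  set d₁ : ℝ := min (η₂' / 3) (T₀ / 2) with hd₁def
  clear_value d₁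
  have hd₁0 : 0 < d₁ := hd₁def ▸ lt_min (by linarith) (by linarith)
  have hd₁a : d₁ ≤ η₂' / 3 := hd₁def ▸ min_le_left _ _
  have hd₁T : d₁ ≤ T₀ / 2 := hd₁def ▸ min_le_right _ _
  have hη₂'a : η₂' ≤ η₂ := hη₂'def ▸ min_le_left _ _
  have hη₂'b : η₂' ≤ η' := hη₂'def ▸ min_le_right _ _
  have hd₁η₂ : d₁ < η₂ := by linarith
  have hd₁η' : 3 * d₁ ≤ η' := by linarith
  have hd₁η : 2 * d₁ < η := by linarith
  have hd₁1 : d₁ ≤ 1 / 3 := by linarith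
  have hd₁d₀ : d₁ < d₀ / 2 := by linarith
  refine ⟨d₁, hd₁0, fun ξ₁ ξ₂ hξ₁ hξ₂ t₁ t₂ hL hi₁ hi₂ => ?_⟩
  set L : ℝ := t₂ - t₁ with hLdef
  clear_value L
  have hL2 : (2:ℝ) ≤ L := by
    have h1 : T₀ / d₁ ≥ 2 := by
      rw [ge_iff_le, le_div_iff₀ hd₁0]; linarith
    linarith
  have hL0 : (0:ℝ) < L := by linarith
  -- pick points on γ near ξ₁ t₁ and ξ₂ t₂
  have hγne : γ.Nonempty := ⟨p, by rw [hγ]; exact ⟨0, hzero p⟩⟩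
  obtain ⟨q₁, hq₁γ, hq₁⟩ := (Metric.infDist_lt_iff hγne).1 hi₁
  obtain ⟨q₂, hq₂γ, hq₂⟩ := (Metric.infDist_lt_iff hγne).1 hi₂
  rw [hγ] at hq₁γ hq₂γ
  obtain ⟨a, ha⟩ := hq₁γ
  obtain ⟨b, hb⟩ := hq₂γ
  simp only at ha hb
  -- choose the time rescaling δ
  set k : ℤ := round ((L - (b - a)) / T₀) with hkdef
  clear_value k
  set c : ℝ := b - a + (k : ℝ) * T₀ with hcdef
  clear_value c
  have hcL : |c - L| ≤ T₀ / 2 := by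
    have h1 : |(L - (b - a)) / T₀ - (k : ℝ)| ≤ 1 / 2 := hkdef ▸ abs_sub_round _
    have h2 : c - L = -(T₀ * ((L - (b - a)) / T₀ - (k : ℝ))) := by
      field_simp [hcdef]
      rw [hcdef]; ring
    rw [h2, abs_neg, abs_mul, abs_of_pos hT₀]
    nlinarith
  set δ : ℝ := (c - L) / L with hδdef
  clear_value δ
  have hδabs : |δ| ≤ d₁ / 2 := by
    rw [hδdef, abs_div, abs_of_pos hL0, div_le_iff₀ hL0]
    have h1 : T₀ ≤ L * d₁ := by
      rw [div_le_iff₀ hd₁0] at hL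
      · linarith
    nlinarith
  have hδ1 : |δ| ≤ 1 / 6 := by linarith
  have hδlo : -(1/6 : ℝ) ≤ δ := neg_le_of_abs_le hδ1
  have hδhi : δ ≤ (1/6 : ℝ) := le_of_abs_le hδ1
  have h1δ0 : (0:ℝ) ≤ 1 + δ := by linarith
  have h1δ2 : (1:ℝ) + δ ≤ 2 := by linarith
  have hIcc : ∀ u : ℝ, 0 ≤ u → u ≤ 1 → (1 + δ) * u ∈ Icc (-2:ℝ) 2 := by
    intro u h0 h1
    constructor
    · have := mul_nonneg h1δ0 h0; linarith
    · have h2 := mul_le_of_le_one_right h1δ0 h1; linarith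
  have habsδu : ∀ u : ℝ, 0 ≤ u → u ≤ 1 → |δ * u| ≤ d₁ / 2 := by
    intro u h0 h1
    rw [abs_mul, abs_of_nonneg h0]
    have h2 : |δ| * u ≤ |δ| * 1 := mul_le_mul_of_nonneg_left h1 (abs_nonneg δ)
    linarith
  -- the key matching identity
  have hkey : φ ((1 + δ) * L) q₁ = q₂ := by
    have h1 : (1 + δ) * L = c := by
      rw [hδdef]; field_simp; ring
    rw [h1, ← ha, ← hadd]
    have h2 : c + a = b + (k : ℝ) * T₀ := by rw [hcdef]; ring
    rw [h2, hadd, hperZ, hb]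
  -- the glued pseudotrajectory
  set ξ : ℝ → Λ := fun t =>
    if t ≤ t₁ then ξ₁ t else if t < t₂ then φ ((1 + δ) * (t - t₁)) q₁ else ξ₂ t
    with hξdef
  clear_value ξ
  have hξa : ∀ t, t ≤ t₁ → ξ t = ξ₁ t := by
    intro t ht
    simp only [hξdef, if_pos ht]
  have hξb : ∀ t, t₁ < t → t < t₂ → ξ t = φ ((1 + δ) * (t - t₁)) q₁ := by
    intro t h1 h2
    simp only [hξdef, if_neg (not_le.2 h1), if_pos h2]
  have hξc : ∀ t, t₂ ≤ t → ξ t = ξ₂ t := by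
    intro t h2
    have h1 : ¬ t ≤ t₁ := not_le.2 (by linarith)
    simp only [hξdef, if_neg h1, if_neg (not_lt.2 h2)]
  refine ⟨ξ, ?_, fun t ht => hξa t ht, fun t ht => hξc t ht, ?_⟩
  · -- IsPseudo φ d₀ ξ
    intro t s hs
    obtain ⟨hs0, hs1⟩ := hs
    by_cases hA : t + s ≤ t₁
    · -- both in ξ₁ part
      rw [hξa _ hA, hξa _ (by linarith)]
      exact lt_trans (hξ₁ t s ⟨hs0, hs1⟩) (by linarith)
    push_neg at hA
    by_cases hD : t₂ ≤ t
    · -- both in ξ₂ part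
      rw [hξc _ hD, hξc _ (by linarith)]
      exact lt_trans (hξ₂ t s ⟨hs0, hs1⟩) (by linarith)
    push_neg at hD
    by_cases hB : t ≤ t₁
    · -- entry case: t ≤ t₁ < t + s
      have hts2 : t + s < t₂ := by linarith
      rw [hξa _ hB, hξb _ hA hts2]
      set u : ℝ := t + s - t₁ with hudef
      clear_value u
      set r : ℝ := t₁ - t with hrdef
      clear_value r
      have hu0 : 0 < u := by simp only [hudef]; linarith
      have hu1 : u ≤ 1 := by simp only [hudef]; linarith
      have hr0 : 0 ≤ r := by simp only [hrdef]; linarith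
      have hr1 : r ≤ 1 := by simp only [hrdef]; linarith
      have hsur : s = u + r := by simp only [hudef, hrdef]; ring
      have hz : dist (φ r (ξ₁ t)) q₁ < 2 * d₁ := by
        have h1 : dist (ξ₁ (t + r)) (φ r (ξ₁ t)) < d₁ := hξ₁ t r ⟨hr0, hr1⟩
        have h2 : t + r = t₁ := by simp only [hrdef]; ring
        rw [h2] at h1
        calc dist (φ r (ξ₁ t)) q₁ ≤ dist (φ r (ξ₁ t)) (ξ₁ t₁) + dist (ξ₁ t₁) q₁ :=
              dist_triangle _ _ _
          _ < 2 * d₁ := by rw [dist_comm (φ r (ξ₁ t))]; linarith [hq₁]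
      have hφs : φ s (ξ₁ t) = φ u (φ r (ξ₁ t)) := by rw [hsur, hadd]
      rw [hφs]
      have h := hη ((1 + δ) * u) (hIcc u hu0.le hu1) u
        ⟨by linarith, by linarith⟩ q₁ (φ r (ξ₁ t)) ?_ ?_
      · linarith
      · have he : (1 + δ) * u - u = δ * u := by ring
        rw [he]
        have := habsδu u hu0.le hu1
        linarith
      · rw [dist_comm]; linarith
    push_neg at hB
    -- now t₁ < t < t₂
    by_cases hC : t + s < t₂
    · -- middle case
      rw [hξb _ hB hD, hξb _ (by linarith) hC]
      set x : Λ := φ ((1 + δ) * (t - t₁)) q₁ with hxdef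
      clear_value x
      have h1 : φ ((1 + δ) * (t + s - t₁)) q₁ = φ ((1 + δ) * s) x := by
        rw [hxdef, ← hadd]
        congr 1
        ring
      rw [h1]
      have h := hη ((1 + δ) * s) (hIcc s hs0 hs1) s
        ⟨by linarith, by linarith⟩ x x ?_ ?_
      · linarith
      · have he : (1 + δ) * s - s = δ * s := by ring
        rw [he]
        have := habsδu s hs0 hs1
        linarith
      · simpa using hη0
    push_neg at hC
    -- exit case: t₁ < t < t₂ ≤ t + s
    rw [hξb _ hB hD, hξc _ hC]
    set x : Λ := φ ((1 + δ) * (t - t₁)) q₁ with hxdef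
    clear_value x
    set v : ℝ := t₂ - t with hvdef
    clear_value v
    set w : ℝ := s - v with hwdef
    clear_value w
    have hv0 : 0 < v := by simp only [hvdef]; linarith
    have hv1 : v ≤ 1 := by simp only [hvdef]; linarith
    have hw0 : 0 ≤ w := by simp only [hwdef, hvdef]; linarith
    have hw1 : w ≤ 1 := by simp only [hwdef, hvdef]; linarith
    -- step 1 : φ v x is η-close to ξ₂ t₂
    have hq₂x : q₂ = φ ((1 + δ) * v) x := by
      rw [← hkey, hxdef, ← hadd]
      congr 1
      simp only [hLdef, hvdef]
      ring
    have hstep1 : dist (φ v x) (ξ₂ t₂) < η' := by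
      have h := hη₂ v ⟨by linarith, by linarith⟩ ((1 + δ) * v)
        (hIcc v hv0.le hv1) x x ?_ ?_
      · rw [← hq₂x] at h
        calc dist (φ v x) (ξ₂ t₂) ≤ dist (φ v x) q₂ + dist q₂ (ξ₂ t₂) :=
            dist_triangle _ _ _
          _ < η' / 2 + d₁ := by
              rw [dist_comm q₂]
              exact add_lt_add h hq₂
          _ ≤ η' := by linarith
      · have he : v - (1 + δ) * v = -(δ * v) := by ring
        rw [he, abs_neg]
        have := habsδu v hv0.le hv1
        linarith
      · simpa using hη₂0
    -- step 2 : push forward by time w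
    have hφs : φ s x = φ w (φ v x) := by
      rw [← hadd]
      congr 1
      simp only [hwdef]
      ring
    have hstep2 : dist (φ w (φ v x)) (φ w (ξ₂ t₂)) < d₀ / 2 := by
      have h := hη w ⟨by linarith, by linarith⟩ w ⟨by linarith, by linarith⟩
        (φ v x) (ξ₂ t₂) (by simpa using hη0) (by linarith)
      exact h
    -- step 3 : pseudotrajectory estimate for ξ₂
    have hstep3 : dist (ξ₂ (t₂ + w)) (φ w (ξ₂ t₂)) < d₁ := hξ₂ t₂ w ⟨hw0, hw1⟩
    have hts : t + s = t₂ + w := by simp only [hwdef, hvdef]; ring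
    rw [hts, hφs]
    calc dist (ξ₂ (t₂ + w)) (φ w (φ v x))
        ≤ dist (ξ₂ (t₂ + w)) (φ w (ξ₂ t₂)) + dist (φ w (ξ₂ t₂)) (φ w (φ v x)) :=
          dist_triangle _ _ _
      _ < d₁ + d₀ / 2 := by
          rw [dist_comm (φ w (ξ₂ t₂))]
          exact add_lt_add hstep3 hstep2
      _ < d₀ := by linarith
  · -- ξ stays on γ in the middle
    intro t ht
    rw [hξb t ht.1 ht.2, hγ, ← ha, ← hadd]
    exact ⟨(1 + δ) * (t - t₁) + a, rfl⟩
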